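/- Let χ be a Hecke character of K of type ε modulo f, and let n be a positive integer such that χ(a)^n ∈ K^× for every a ∈ I(f) and such that ζ^n = 1 for every root of unity ζ lying in K(χ). Then: (i) for every α ∈ K^× coprime to f one has χ(αO_K)^n ∈ (K^×)^n; and (ii) if a ∈ I(f) satisfies χ(a)^n ∈ (K^×)^n, then a is a principal fractional ideal. Consequently a ↦ χ(a)^n·(K^×)^n induces a well-defined injective group homomorphism I(f)/P(f) → K^×/(K^×)^n. -/

import Mathlib

set_option synthInstance.maxHeartbeats 1000000
set_option maxHeartbeats 2000000


open NumberField FractionalIdeal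
open scoped nonZeroDivisors

noncomputable section

variable {K : Type*} [Field K] [NumberField K]

/-- The group `I(f)` of invertible fractional ideals of `K` coprime to the modulus `f`:
`a ∈ I(f)` iff `a = b * c⁻¹` with `b, c` integral ideals coprime to `f`. -/
def coprimeIdeals (f : Ideal (𝓞 K)) : Subgroup (FractionalIdeal (𝓞 K)⁰ K)ˣ where
  carrier := {a | ∃ b c : Ideal (𝓞 K), IsCoprime b f ∧ IsCoprime c f ∧
    (a : FractionalIdeal (𝓞 K)⁰ K) * (c : FractionalIdeal (𝓞 K)⁰ K) =
      (b : FractionalIdeal (𝓞 K)⁰ K)}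
  one_mem' := ⟨1, 1, isCoprime_one_left, isCoprime_one_left, by simp⟩
  mul_mem' := by
    rintro a a' ⟨b, c, hb, hc, h⟩ ⟨b', c', hb', hc', h'⟩
    refine ⟨b * b', c * c', hb.mul_left hb', hc.mul_left hc', ?_⟩
    rw [coeIdeal_mul, coeIdeal_mul, Units.val_mul, mul_mul_mul_comm, h, h']
  inv_mem' := by
    rintro a ⟨b, c, hb, hc, h⟩
    refine ⟨c, b, hc, hb, ?_⟩
    have h1 : ((a⁻¹ : (FractionalIdeal (𝓞 K)⁰ K)ˣ) : FractionalIdeal (𝓞 K)⁰ K) * a = 1 := by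
      rw [← Units.val_mul, inv_mul_cancel, Units.val_one]
    calc ((a⁻¹ : (FractionalIdeal (𝓞 K)⁰ K)ˣ) : FractionalIdeal (𝓞 K)⁰ K) * b
        = ((a⁻¹ : (FractionalIdeal (𝓞 K)⁰ K)ˣ) : FractionalIdeal (𝓞 K)⁰ K) *
          ((a : FractionalIdeal (𝓞 K)⁰ K) * c) := by rw [h]
      _ = c := by rw [← mul_assoc, h1, one_mul]

/-- `χ : I(f) → ℂˣ` is a Hecke character of `K` of type `ε` modulo `f`, i.e.
`χ(αO_K) = ε(α)·α` for every `α = β/γ ∈ K^×` coprime to `f`. -/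
def IsHeckeChar [Algebra K ℂ] {f : Ideal (𝓞 K)} (ε : ((𝓞 K) ⧸ f)ˣ →* ℂˣ)
    (χ : coprimeIdeals f →* ℂˣ) : Prop :=
  ∀ β γ : 𝓞 K, IsCoprime (Ideal.span {β}) f → IsCoprime (Ideal.span {γ}) f →
  ∀ u v : ((𝓞 K) ⧸ f)ˣ, (u : (𝓞 K) ⧸ f) = Ideal.Quotient.mk f β →
    (v : (𝓞 K) ⧸ f) = Ideal.Quotient.mk f γ →
  ∀ a : coprimeIdeals f,
    ((a : (FractionalIdeal (𝓞 K)⁰ K)ˣ) : FractionalIdeal (𝓞 K)⁰ K) =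
      spanSingleton (𝓞 K)⁰ (algebraMap (𝓞 K) K β / algebraMap (𝓞 K) K γ) →
    (χ a : ℂ) = (ε u : ℂ) * ((ε v : ℂ))⁻¹ *
      algebraMap K ℂ (algebraMap (𝓞 K) K β / algebraMap (𝓞 K) K γ)

/-- `K(χ)`: the subfield of `ℂ` generated over `K` by the values of `χ`. -/
def heckeField [Algebra K ℂ] {f : Ideal (𝓞 K)} (χ : coprimeIdeals f →* ℂˣ) :
    IntermediateField K ℂ :=
  IntermediateField.adjoin K (Set.range fun a : coprimeIdeals f => ((χ a : ℂˣ) : ℂ))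

/-- `P(f)`: the subgroup of `I(f)` consisting of principal fractional ideals. -/
def principalCoprime (f : Ideal (𝓞 K)) : Subgroup ↥(coprimeIdeals f) :=
  Subgroup.comap (coprimeIdeals f).subtype (toPrincipalIdeal (𝓞 K) K).range

/-- `H(f) = {a ∈ I(f) : a² ∈ P(f)}`. -/
def genusSet (f : Ideal (𝓞 K)) : Set ↥(coprimeIdeals f) :=
  {a | a ^ 2 ∈ principalCoprime f}

/-- `T_g`: the subfield of `ℂ` generated over `K` by the values `χ(a)`, `a ∈ H(f)`. -/
def genusField [Algebra K ℂ] {f : Ideal (𝓞 K)} (χ : coprimeIdeals f →* ℂˣ) :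
    IntermediateField K ℂ :=
  IntermediateField.adjoin K ((fun a => ((χ a : ℂˣ) : ℂ)) '' genusSet f)

/-- `L`: the subfield of `ℂ` generated over `K` by the values of `ε`. -/
def epsField [Algebra K ℂ] {f : Ideal (𝓞 K)} (ε : ((𝓞 K) ⧸ f)ˣ →* ℂˣ) :
    IntermediateField K ℂ :=
  IntermediateField.adjoin K (Set.range fun u => ((ε u : ℂˣ) : ℂ))

lemma chi_mem_heckeField [Algebra K ℂ] {f : Ideal (𝓞 K)} (χ : coprimeIdeals f →* ℂˣ)
    (a : coprimeIdeals f) : ((χ a : ℂˣ) : ℂ) ∈ heckeField χ :=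
  IntermediateField.subset_adjoin K _ ⟨a, rfl⟩

/-- `ξ` is a generator of `μ₂(ε)`, the group of elements of 2-power order
in the image of `ε`. -/
def IsMu2Gen {f : Ideal (𝓞 K)} (ε : ((𝓞 K) ⧸ f)ˣ →* ℂˣ) (ξ : ℂˣ) : Prop :=
  (∃ u, ε u = ξ) ∧ (∃ k : ℕ, ξ ^ 2 ^ k = 1) ∧
  ∀ ζ : ℂˣ, (∃ u, ε u = ζ) → (∃ k : ℕ, ζ ^ 2 ^ k = 1) → ∃ m : ℕ, ζ = ξ ^ m

/-- Condition (3.6) on `ε`. -/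
def Cond36 (D : ℕ) {f : Ideal (𝓞 K)} (ε : ((𝓞 K) ⧸ f)ˣ →* ℂˣ) : Prop :=
  (∀ u, (ε u) ^ 12 = 1) ∧ (¬ 3 ∣ D → ∀ u, (ε u) ^ 4 = 1) ∧
    (¬ 2 ∣ D → ∀ u, (ε u) ^ 6 = 1) ∧ (Nat.gcd 6 D = 1 → ∀ u, (ε u) ^ 2 = 1)


namespace HeckeAux

variable {K : Type*} [Field K] [NumberField K]

lemma algMap_inj : Function.Injective (algebraMap (𝓞 K) K) :=
  IsFractionRing.injective (𝓞 K) K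

lemma exists_unit_mk {f : Ideal (𝓞 K)} {β : 𝓞 K}
    (h : IsCoprime (Ideal.span {β}) f) :
    ∃ u : ((𝓞 K) ⧸ f)ˣ, (u : (𝓞 K) ⧸ f) = Ideal.Quotient.mk f β := by
  obtain ⟨i, hi, j, hj, hij⟩ := Ideal.isCoprime_iff_exists.mp h
  obtain ⟨c, rfl⟩ := Ideal.mem_span_singleton'.mp hi
  have h1 : Ideal.Quotient.mk f (c * β) = 1 := by
    rw [← map_one (Ideal.Quotient.mk f), Ideal.Quotient.eq]
    have hcb : c * β - 1 = -j := by linear_combination hij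
    rw [hcb]; exact f.neg_mem hj
  refine ⟨⟨Ideal.Quotient.mk f β, Ideal.Quotient.mk f c, ?_, ?_⟩, rfl⟩
  · rw [← _root_.map_mul, mul_comm]; exact h1
  · rw [← _root_.map_mul]; exact h1

lemma ideal_pow_inj {I J : Ideal (𝓞 K)} (hI : I ≠ ⊥) (hJ : J ≠ ⊥) {m : ℕ} (hm : m ≠ 0)
    (h : I ^ m = J ^ m) : I = J := by
  classical
  rw [← associated_iff_eq,
    UniqueFactorizationMonoid.associated_iff_normalizedFactors_eq_normalizedFactors hI hJ]
  have h2 := congrArg UniqueFactorizationMonoid.normalizedFactors h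
  rw [UniqueFactorizationMonoid.normalizedFactors_pow,
    UniqueFactorizationMonoid.normalizedFactors_pow] at h2
  refine Multiset.ext.mpr fun p => ?_
  have h3 := congrArg (Multiset.count p) h2
  rw [Multiset.count_nsmul, Multiset.count_nsmul] at h3
  exact Nat.eq_of_mul_eq_mul_left (Nat.pos_of_ne_zero hm) h3

lemma units_pow_eq_one {u : (FractionalIdeal (𝓞 K)⁰ K)ˣ} {m : ℕ} (hm : m ≠ 0)
    (h : u ^ m = 1) : u = 1 := by
  obtain ⟨a, aI, ha, hrep⟩ := exists_eq_spanSingleton_mul (u : FractionalIdeal (𝓞 K)⁰ K)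
  have hφa : (algebraMap (𝓞 K) K a) ≠ 0 := fun hh => ha (algMap_inj (by rw [hh, _root_.map_zero]))
  have hss : spanSingleton (𝓞 K)⁰ (algebraMap (𝓞 K) K a) *
      spanSingleton (𝓞 K)⁰ (algebraMap (𝓞 K) K a)⁻¹ = 1 := by
    rw [spanSingleton_mul_spanSingleton, mul_inv_cancel₀ hφa, spanSingleton_one]
  have key : spanSingleton (𝓞 K)⁰ (algebraMap (𝓞 K) K a) *
      (u : FractionalIdeal (𝓞 K)⁰ K) = (aI : FractionalIdeal (𝓞 K)⁰ K) := by
    rw [hrep, ← mul_assoc, hss, one_mul]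
  have hpow : ((u : FractionalIdeal (𝓞 K)⁰ K)) ^ m = 1 := by
    rw [← Units.val_pow_eq_pow_val, h, Units.val_one]
  have key2 : ((Ideal.span {a ^ m} : Ideal (𝓞 K)) : FractionalIdeal (𝓞 K)⁰ K) =
      ((aI ^ m : Ideal (𝓞 K)) : FractionalIdeal (𝓞 K)⁰ K) := by
    rw [coeIdeal_span_singleton, _root_.map_pow, coeIdeal_pow, ← key, mul_pow, hpow, mul_one,
      ← spanSingleton_pow]
  have key3 : Ideal.span {a} ^ m = aI ^ m := by
    rw [Ideal.span_singleton_pow]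
    exact coeIdeal_injective key2
  have haI : aI ≠ ⊥ := by
    rintro rfl
    rw [← Ideal.zero_eq_bot, zero_pow hm] at key3
    exact ha (by simpa [Ideal.span_singleton_pow, Ideal.zero_eq_bot,
      Ideal.span_singleton_eq_bot, hm] using key3)
  have heq : Ideal.span {a} = aI := ideal_pow_inj
    (by simpa [Ideal.span_singleton_eq_bot] using ha) haI hm key3
  apply Units.ext
  rw [hrep, ← heq, coeIdeal_span_singleton, mul_comm, hss, Units.val_one]

lemma exists_coprime_rep {f : Ideal (𝓞 K)}
    (a : coprimeIdeals f) (x0 : K)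
    (hx : ((a : (FractionalIdeal (𝓞 K)⁰ K)ˣ) : FractionalIdeal (𝓞 K)⁰ K) =
      spanSingleton (𝓞 K)⁰ x0) :
    ∃ β γ : 𝓞 K, IsCoprime (Ideal.span {β}) f ∧ IsCoprime (Ideal.span {γ}) f ∧
      algebraMap (𝓞 K) K β / algebraMap (𝓞 K) K γ = x0 := by
  by_cases hftop : f = ⊤
  · subst hftop
    obtain ⟨β, γ, hγ, hdiv⟩ := IsFractionRing.div_surjective (A := 𝓞 K) x0
    exact ⟨β, γ, Ideal.isCoprime_iff_add.mpr (by simp),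
      Ideal.isCoprime_iff_add.mpr (by simp), hdiv⟩
  · obtain ⟨b, c, hb, hc, habc⟩ := a.2
    obtain ⟨i, hi, j, hj, hij⟩ := Ideal.isCoprime_iff_exists.mp hc
    have hγcop : IsCoprime (Ideal.span {i}) f :=
      Ideal.isCoprime_iff_exists.mpr ⟨i, Ideal.mem_span_singleton_self i, j, hj, hij⟩
    have hγ0 : i ≠ 0 := by
      rintro rfl
      rw [zero_add] at hij
      exact hftop ((Ideal.eq_top_iff_one f).mpr (hij ▸ hj))
    have hφγ : algebraMap (𝓞 K) K i ≠ 0 := fun hh => hγ0 (algMap_inj (by rw [hh, _root_.map_zero]))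
    have hmem : x0 * algebraMap (𝓞 K) K i ∈
        ((b : Ideal (𝓞 K)) : FractionalIdeal (𝓞 K)⁰ K) := by
      rw [← habc]
      exact mul_mem_mul (hx ▸ mem_spanSingleton_self _ x0)
        ((mem_coeIdeal _).mpr ⟨i, hi, rfl⟩)
    obtain ⟨β, hβb, hβ⟩ := (mem_coeIdeal _).mp hmem
    have hideal : Ideal.span {β} * c = b * Ideal.span {i} := by
      have hfr : ((Ideal.span {β} * c : Ideal (𝓞 K)) : FractionalIdeal (𝓞 K)⁰ K) =
          ((b * Ideal.span {i} : Ideal (𝓞 K)) : FractionalIdeal (𝓞 K)⁰ K) := by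
        rw [coeIdeal_mul, coeIdeal_mul, coeIdeal_span_singleton, coeIdeal_span_singleton, hβ,
        ← spanSingleton_mul_spanSingleton, ← hx]
        rw [mul_comm ((b : FractionalIdeal (𝓞 K)⁰ K)), ← habc]
        ring
      exact coeIdeal_injective hfr
    have hβcop : IsCoprime (Ideal.span {β}) f := by
      rw [Ideal.isCoprime_iff_add, Ideal.one_eq_top]
      have h1 : Ideal.span {β} * c + f = ⊤ := by
        rw [hideal, ← Ideal.one_eq_top, ← Ideal.isCoprime_iff_add]
        exact hb.mul_left hγcop
      exact top_le_iff.mp (h1 ▸ sup_le_sup_right Ideal.mul_le_left f)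
    refine ⟨β, i, hβcop, hγcop, ?_⟩
    rw [hβ]
    field_simp

end HeckeAux


namespace HeckeAux

variable {K : Type*} [Field K] [NumberField K]

lemma chi_pow_core [Algebra K ℂ] {f : Ideal (𝓞 K)} (hf : f ≠ ⊥)
    (ε : ((𝓞 K) ⧸ f)ˣ →* ℂˣ) (χ : coprimeIdeals f →* ℂˣ) (hχ : IsHeckeChar ε χ)
    (n : ℕ)
    (hroots : ∀ ζ : ℂ, ζ ∈ heckeField χ → (∃ m : ℕ, 0 < m ∧ ζ ^ m = 1) → ζ ^ n = 1)
    {β γ : 𝓞 K} (hβ : IsCoprime (Ideal.span {β}) f) (hγ : IsCoprime (Ideal.span {γ}) f)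
    (a : coprimeIdeals f)
    (ha : ((a : (FractionalIdeal (𝓞 K)⁰ K)ˣ) : FractionalIdeal (𝓞 K)⁰ K) =
      spanSingleton (𝓞 K)⁰ (algebraMap (𝓞 K) K β / algebraMap (𝓞 K) K γ)) :
    algebraMap (𝓞 K) K β / algebraMap (𝓞 K) K γ ≠ 0 ∧
    ((χ a : ℂˣ) : ℂ) ^ n =
      algebraMap K ℂ (algebraMap (𝓞 K) K β / algebraMap (𝓞 K) K γ) ^ n := by
  obtain ⟨u, hu⟩ := exists_unit_mk hβ
  obtain ⟨v, hv⟩ := exists_unit_mk hγ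
  have heq := hχ β γ hβ hγ u v hu hv a ha
  set α : K := algebraMap (𝓞 K) K β / algebraMap (𝓞 K) K γ with hα
  have hα0 : α ≠ 0 := by
    intro h0
    rw [h0, spanSingleton_zero] at ha
    have h1 : ((a : (FractionalIdeal (𝓞 K)⁰ K)ˣ) : FractionalIdeal (𝓞 K)⁰ K) *
        ((((a : (FractionalIdeal (𝓞 K)⁰ K)ˣ))⁻¹ : (FractionalIdeal (𝓞 K)⁰ K)ˣ) :
          FractionalIdeal (𝓞 K)⁰ K) = 1 := by
      rw [← Units.val_mul, mul_inv_cancel, Units.val_one]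
    rw [ha, zero_mul] at h1
    exact zero_ne_one h1
  have hφα : algebraMap K ℂ α ≠ 0 := fun hh =>
    hα0 ((algebraMap K ℂ).injective (by rw [hh, _root_.map_zero]))
  set ζ : ℂ := (ε u : ℂ) * ((ε v : ℂ))⁻¹ with hζ
  have hζval : (χ a : ℂ) = ζ * algebraMap K ℂ α := heq
  have hζmem : ζ ∈ heckeField χ := by
    have hz : ζ = (χ a : ℂ) * (algebraMap K ℂ α)⁻¹ := by
      rw [hζval]; field_simp
    rw [hz]
    exact mul_mem (chi_mem_heckeField χ a)
      (inv_mem ((heckeField χ).algebraMap_mem α))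
  letI : Fintype ((𝓞 K) ⧸ f) := @Fintype.ofFinite _ (Ideal.finiteQuotientOfFreeOfNeBot f hf)
  have hζu : ζ = ((ε (u * v⁻¹) : ℂˣ) : ℂ) := by
    rw [_root_.map_mul, _root_.map_inv, Units.val_mul, Units.val_inv_eq_inv_val]
  have hm : 0 < orderOf (u * v⁻¹) := orderOf_pos _
  have hζm : ζ ^ orderOf (u * v⁻¹) = 1 := by
    rw [hζu, ← Units.val_pow_eq_pow_val, ← _root_.map_pow, pow_orderOf_eq_one,
      _root_.map_one, Units.val_one]
  have hζn : ζ ^ n = 1 := hroots ζ hζmem ⟨orderOf (u * v⁻¹), hm, hζm⟩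
  exact ⟨hα0, by rw [hζval, mul_pow, hζn, one_mul]⟩

lemma principal_of_chi_pow [Algebra K ℂ] {f : Ideal (𝓞 K)} (hf : f ≠ ⊥)
    (ε : ((𝓞 K) ⧸ f)ˣ →* ℂˣ) (χ : coprimeIdeals f →* ℂˣ) (hχ : IsHeckeChar ε χ)
    (n : ℕ) (hn : 0 < n)
    (hroots : ∀ ζ : ℂ, ζ ∈ heckeField χ → (∃ m : ℕ, 0 < m ∧ ζ ^ m = 1) → ζ ^ n = 1)
    (a : coprimeIdeals f) (x : Kˣ)
    (hx : ((χ a : ℂˣ) : ℂ) ^ n = algebraMap K ℂ (x : K) ^ n) :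
    (a : (FractionalIdeal (𝓞 K)⁰ K)ˣ) ∈ (toPrincipalIdeal (𝓞 K) K).range := by
  classical
  set h := Fintype.card (ClassGroup (𝓞 K)) with hh
  have hhpos : 0 < h := Fintype.card_pos
  set A : (FractionalIdeal (𝓞 K)⁰ K)ˣ := (a : (FractionalIdeal (𝓞 K)⁰ K)ˣ) ^ h with hA
  have hcg : ClassGroup.mk K A = 1 := by
    rw [hA, _root_.map_pow, hh, pow_card_eq_one]
  obtain ⟨x0, hx0⟩ := (ClassGroup.mk_eq_one_iff.mp hcg)
  have hx0' : (A : FractionalIdeal (𝓞 K)⁰ K) = spanSingleton (𝓞 K)⁰ x0 := by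
    have hsub : ((A : FractionalIdeal (𝓞 K)⁰ K) : Submodule (𝓞 K) K) =
        ((spanSingleton (𝓞 K)⁰ x0 : FractionalIdeal (𝓞 K)⁰ K) : Submodule (𝓞 K) K) := by
      rw [coe_spanSingleton, ← hx0]
    exact coeToSubmodule_injective hsub
  have hx00 : x0 ≠ 0 := by
    intro h0
    rw [h0, spanSingleton_zero] at hx0'
    exact Units.ne_zero A hx0'
  have hApow : ((((a ^ h : coprimeIdeals f) : (FractionalIdeal (𝓞 K)⁰ K)ˣ)) :
      FractionalIdeal (𝓞 K)⁰ K) = spanSingleton (𝓞 K)⁰ x0 := by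
    rw [← hx0', hA]; norm_cast
  obtain ⟨β, γ, hβ, hγ, hdiv⟩ := exists_coprime_rep (a ^ h) x0 hApow
  have hcore := chi_pow_core hf ε χ hχ n hroots hβ hγ (a ^ h) (by rw [hdiv, ← hApow])
  have hkey : algebraMap K ℂ ((x : K) ^ (n * h)) = algebraMap K ℂ (x0 ^ n) := by
    rw [_root_.map_pow, _root_.map_pow, ← hdiv, ← hcore.2, _root_.map_pow χ,
      Units.val_pow_eq_pow_val, ← pow_mul, pow_mul (algebraMap K ℂ (x : K)) n h, ← hx,
      ← pow_mul, mul_comm n h]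
  have hkeyK : (x : K) ^ (n * h) = x0 ^ n := (algebraMap K ℂ).injective hkey
  set x0u : Kˣ := Units.mk0 x0 hx00 with hx0u
  have hxu : x ^ (n * h) = x0u ^ n := by
    apply Units.ext
    rw [Units.val_pow_eq_pow_val, Units.val_pow_eq_pow_val]
    exact hkeyK
  have hs0 : toPrincipalIdeal (𝓞 K) K x0u = A := by
    apply Units.ext
    rw [coe_toPrincipalIdeal, hx0']
    rfl
  set w : (FractionalIdeal (𝓞 K)⁰ K)ˣ :=
    (a : (FractionalIdeal (𝓞 K)⁰ K)ˣ) * (toPrincipalIdeal (𝓞 K) K x)⁻¹ with hw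
  have hwpow : w ^ (h * n) = 1 := by
    have h1 : (a : (FractionalIdeal (𝓞 K)⁰ K)ˣ) ^ (h * n) =
        (toPrincipalIdeal (𝓞 K) K x) ^ (h * n) := by
      rw [pow_mul, ← hA, ← hs0, ← _root_.map_pow, ← hxu, _root_.map_pow, mul_comm n h]
    rw [hw, mul_pow, h1, inv_pow, mul_inv_cancel]
  have hw1 : w = 1 := units_pow_eq_one (Nat.mul_ne_zero hhpos.ne' hn.ne') hwpow
  have : (a : (FractionalIdeal (𝓞 K)⁰ K)ˣ) = toPrincipalIdeal (𝓞 K) K x := by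
    rwa [hw, mul_inv_eq_one] at hw1
  exact ⟨x, this.symm⟩

end HeckeAux

end

/-- The map `a ↦ χ(a)ⁿ (K^×)ⁿ` induces a well-defined injective
group homomorphism `I(f)/P(f) → K^×/(K^×)ⁿ`. -/
theorem heckeChar_pow_injective
    (D : ℕ) (hD : 0 < D)
    (K : Type) [Field K] [NumberField K] [Algebra K ℂ]
    (hdeg : Module.finrank ℚ K = 2)
    (hdisc : NumberField.discr K = -(D : ℤ))
    (himag : ∃ w : K, w ^ 2 = -(D : K) ∧ 0 < (algebraMap K ℂ w).im)
    (f : Ideal (𝓞 K)) (hf : f ≠ ⊥)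
    (ε : ((𝓞 K) ⧸ f)ˣ →* ℂˣ)
    (χ : coprimeIdeals f →* ℂˣ) (hχ : IsHeckeChar ε χ)
    (n : ℕ) (hn : 0 < n)
    (hval : ∀ a : coprimeIdeals f, ((χ a : ℂˣ) : ℂ) ^ n ∈ (algebraMap K ℂ).range)
    (hroots : ∀ ζ : ℂ, ζ ∈ heckeField χ → (∃ m : ℕ, 0 < m ∧ ζ ^ m = 1) → ζ ^ n = 1) :
    (∀ β γ : 𝓞 K, IsCoprime (Ideal.span {β}) f → IsCoprime (Ideal.span {γ}) f →
      ∀ a : coprimeIdeals f,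
        ((a : (FractionalIdeal (𝓞 K)⁰ K)ˣ) : FractionalIdeal (𝓞 K)⁰ K) =
          spanSingleton (𝓞 K)⁰ (algebraMap (𝓞 K) K β / algebraMap (𝓞 K) K γ) →
        ∃ x : Kˣ, ((χ a : ℂˣ) : ℂ) ^ n = algebraMap K ℂ (x : K) ^ n) ∧
    (∀ a : coprimeIdeals f,
      (∃ x : Kˣ, ((χ a : ℂˣ) : ℂ) ^ n = algebraMap K ℂ (x : K) ^ n) →
      (a : (FractionalIdeal (𝓞 K)⁰ K)ˣ) ∈ (toPrincipalIdeal (𝓞 K) K).range) ∧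
    (∃ θ : (↥(coprimeIdeals f) ⧸ principalCoprime f) →*
        (Kˣ ⧸ (powMonoidHom n : Kˣ →* Kˣ).range),
      Function.Injective θ ∧
      ∀ (a : coprimeIdeals f) (x : Kˣ),
        algebraMap K ℂ (x : K) = ((χ a : ℂˣ) : ℂ) ^ n →
        θ (QuotientGroup.mk a) = QuotientGroup.mk x) := by
    classical
  have hφinj : Function.Injective (algebraMap K ℂ) := (algebraMap K ℂ).injective
  have part1 : ∀ β γ : 𝓞 K, IsCoprime (Ideal.span {β}) f → IsCoprime (Ideal.span {γ}) f →
      ∀ a : coprimeIdeals f,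
        ((a : (FractionalIdeal (𝓞 K)⁰ K)ˣ) : FractionalIdeal (𝓞 K)⁰ K) =
          spanSingleton (𝓞 K)⁰ (algebraMap (𝓞 K) K β / algebraMap (𝓞 K) K γ) →
        ∃ x : Kˣ, ((χ a : ℂˣ) : ℂ) ^ n = algebraMap K ℂ (x : K) ^ n := by
    intro β γ hβ hγ a ha
    obtain ⟨hα0, hpow⟩ := HeckeAux.chi_pow_core hf ε χ hχ n hroots hβ hγ a ha
    exact ⟨Units.mk0 _ hα0, hpow⟩
  have part2 : ∀ a : coprimeIdeals f,
      (∃ x : Kˣ, ((χ a : ℂˣ) : ℂ) ^ n = algebraMap K ℂ (x : K) ^ n) →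
      (a : (FractionalIdeal (𝓞 K)⁰ K)ˣ) ∈ (toPrincipalIdeal (𝓞 K) K).range := by
    rintro a ⟨x, hx⟩
    exact HeckeAux.principal_of_chi_pow hf ε χ hχ n hn hroots a x hx
  refine ⟨part1, part2, ?_⟩
  have hval' : ∀ a : coprimeIdeals f, ∃ z : K,
      algebraMap K ℂ z = ((χ a : ℂˣ) : ℂ) ^ n := fun a => by
    obtain ⟨z, hz⟩ := hval a
    exact ⟨z, hz⟩
  choose y hy using hval'
  have hyne : ∀ a, y a ≠ 0 := by
    intro a h0
    have h1 := hy a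
    rw [h0, _root_.map_zero] at h1
    exact pow_ne_zero n (Units.ne_zero (χ a)) h1.symm
  have hgmul : ∀ a b : coprimeIdeals f, y (a * b) = y a * y b := by
    intro a b
    apply hφinj
    rw [_root_.map_mul, hy, hy, hy, _root_.map_mul χ, Units.val_mul, mul_pow]
  have hgone : y 1 = 1 := by
    apply hφinj
    rw [hy, _root_.map_one χ, Units.val_one, one_pow, _root_.map_one]
  set χK : ↥(coprimeIdeals f) →* Kˣ :=
    { toFun := fun a => Units.mk0 (y a) (hyne a)
      map_one' := Units.ext hgone
      map_mul' := fun a b => Units.ext (hgmul a b) } with hχKdef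
  have hχKval : ∀ a : coprimeIdeals f, ((χK a : Kˣ) : K) = y a := fun a => rfl
  set ψ : ↥(coprimeIdeals f) →* (Kˣ ⧸ (powMonoidHom n : Kˣ →* Kˣ).range) :=
    (QuotientGroup.mk' (powMonoidHom n : Kˣ →* Kˣ).range).comp χK with hψdef
  have hker : ∀ a : coprimeIdeals f, a ∈ principalCoprime f → ψ a = 1 := by
    intro a hap
    obtain ⟨x0, hx0⟩ := hap
    have hss : ((a : (FractionalIdeal (𝓞 K)⁰ K)ˣ) : FractionalIdeal (𝓞 K)⁰ K) =
        spanSingleton (𝓞 K)⁰ (x0 : K) := by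
      have h2 : (a : (FractionalIdeal (𝓞 K)⁰ K)ˣ) = toPrincipalIdeal (𝓞 K) K x0 := hx0.symm
      rw [h2, coe_toPrincipalIdeal]
    obtain ⟨β, γ, hβ, hγ, hdiv⟩ := HeckeAux.exists_coprime_rep a (x0 : K) hss
    obtain ⟨-, hpow⟩ := HeckeAux.chi_pow_core hf ε χ hχ n hroots hβ hγ a
      (by rw [hdiv]; exact hss)
    have hyx : y a = (x0 : K) ^ n := hφinj (by rw [hy, hpow, hdiv, _root_.map_pow])
    show (QuotientGroup.mk' (powMonoidHom n : Kˣ →* Kˣ).range) (χK a) = 1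
    rw [QuotientGroup.mk'_apply, QuotientGroup.eq_one_iff]
    refine ⟨x0, Units.ext ?_⟩
    rw [powMonoidHom_apply, Units.val_pow_eq_pow_val, hχKval, hyx]
  refine ⟨QuotientGroup.lift (principalCoprime f) ψ (fun a ha => MonoidHom.mem_ker.mpr (hker a ha)), ?_, ?_⟩
  · refine (injective_iff_map_eq_one _).mpr ?_
    intro q hq
    obtain ⟨a, rfl⟩ := QuotientGroup.mk_surjective q
    rw [QuotientGroup.lift_mk'] at hq
    have hmemrange : χK a ∈ (powMonoidHom n : Kˣ →* Kˣ).range := by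
      rw [hψdef] at hq
      exact (QuotientGroup.eq_one_iff _).mp hq
    obtain ⟨x, hxeq⟩ := hmemrange
    have hxx : ((χ a : ℂˣ) : ℂ) ^ n = algebraMap K ℂ (x : K) ^ n := by
      rw [← hy a, ← hχKval a, ← hxeq, powMonoidHom_apply, Units.val_pow_eq_pow_val,
        _root_.map_pow]
    have hmem := HeckeAux.principal_of_chi_pow hf ε χ hχ n hn hroots a x hxx
    exact (QuotientGroup.eq_one_iff a).mpr hmem
  · intro a x hxa
    have hax : χK a = x := Units.ext (hφinj (by rw [hχKval, hy, hxa]))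
    show QuotientGroup.lift (principalCoprime f) ψ (fun a ha => MonoidHom.mem_ker.mpr (hker a ha)) (QuotientGroup.mk a) = _
    rw [QuotientGroup.lift_mk', hψdef, MonoidHom.comp_apply, QuotientGroup.mk'_apply, hax]
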